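/- Let (N,m0) be a live marked N-layer open Π³-net. Then (N,m0) is bounded if and only if cin(q)>0 for every q∈P_N; moreover, when this condition holds, ‖m‖ ≤ Σ_{i=1}^{N−1} C_i^{m0} for every m∈R(m0). -/

import Mathlib

open Finset

section PetriBasics

variable {P T : Type} [Fintype P] [Fintype T]

/-- Transition `t` is enabled at marking `m`. -/
def Enabled (Wm : P → T → ℕ) (m : P → ℕ) (t : T) : Prop :=
  ∀ p, Wm p t ≤ m p

/-- The marking obtained by firing transition `t` at marking `m`. -/
def Fire (Wm Wp : P → T → ℕ) (m : P → ℕ) (t : T) : P → ℕ :=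
  fun p => m p - Wm p t + Wp p t

/-- One firing step. -/
def Step (Wm Wp : P → T → ℕ) (m m' : P → ℕ) : Prop :=
  ∃ t, Enabled Wm m t ∧ m' = Fire Wm Wp m t

/-- Reachability. -/
def Reach (Wm Wp : P → T → ℕ) : (P → ℕ) → (P → ℕ) → Prop :=
  Relation.ReflTransGen (Step Wm Wp)

/-- One firing step using a transition from the set `S`. -/
def StepIn (Wm Wp : P → T → ℕ) (S : T → Prop) (m m' : P → ℕ) : Prop :=
  ∃ t, S t ∧ Enabled Wm m t ∧ m' = Fire Wm Wp m t

/-- Reachability using only transitions from the set `S`. -/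
def ReachIn (Wm Wp : P → T → ℕ) (S : T → Prop) : (P → ℕ) → (P → ℕ) → Prop :=
  Relation.ReflTransGen (StepIn Wm Wp S)

/-- The marked net `(N, m0)` is live. -/
def LiveMarked (Wm Wp : P → T → ℕ) (m0 : P → ℕ) : Prop :=
  ∀ (t : T) (m : P → ℕ), Reach Wm Wp m0 m →
    ∃ m', Reach Wm Wp m m' ∧ Enabled Wm m' t

/-- `b` is a bag of the net. -/
def IsBag (Wm Wp : P → T → ℕ) (b : P → ℕ) : Prop :=
  ∃ t, b = (fun p => Wm p t) ∨ b = (fun p => Wp p t)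

/-- Edges of the bag graph. -/
def BagEdge (Wm Wp : P → T → ℕ) (b b' : P → ℕ) : Prop :=
  ∃ t, b = (fun p => Wm p t) ∧ b' = (fun p => Wp p t)

/-- Every connected component of the bag graph is strongly connected. -/
def WeaklyReversible (Wm Wp : P → T → ℕ) : Prop :=
  ∀ b b' : P → ℕ,
    Relation.ReflTransGen (fun x y => BagEdge Wm Wp x y ∨ BagEdge Wm Wp y x) b b' →
    Relation.ReflTransGen (BagEdge Wm Wp) b b'

/-- `w · W(t)`, where `W = W⁺ − W⁻` is the incidence matrix. -/
def IncDot (Wm Wp : P → T → ℕ) (w : P → ℚ) (t : T) : ℚ :=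
  ∑ p, w p * ((Wp p t : ℚ) - (Wm p t : ℚ))

/-- `w` is a witness of the bag `b`. -/
def IsWitness (Wm Wp : P → T → ℕ) (b : P → ℕ) (w : P → ℚ) : Prop :=
  ∀ t, (b = (fun p => Wm p t) → IncDot Wm Wp w t = -1) ∧
       (b = (fun p => Wp p t) → IncDot Wm Wp w t = 1) ∧
       (b ≠ (fun p => Wm p t) → b ≠ (fun p => Wp p t) → IncDot Wm Wp w t = 0)

/-- `N` is a Π²-net. -/
def IsPi2 (Wm Wp : P → T → ℕ) : Prop :=
  WeaklyReversible Wm Wp ∧ ∀ b, IsBag Wm Wp b → ∃ w, IsWitness Wm Wp b w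

/-- The potential of a place: `‖b_p‖ − 1`. -/
def potOf (bag : P → P → ℕ) (p : P) : ℕ := (∑ q, bag p q) - 1

/-- Minimum of `f` over `S`, with default value `d` when `S` is empty. -/
def minPotD {α : Type} (S : Finset α) (f : α → ℕ) (d : ℕ) : ℕ :=
  if h : S.Nonempty then S.inf' h f else d

end PetriBasics

/-- An `Nn`-layer closed Π³-net. -/
structure ClosedPi3 (P T : Type) [Fintype P] [Fintype T] (Nn : ℕ) where
  Wm : P → T → ℕ
  Wp : P → T → ℕ
  no_useless : ∀ t, (fun p => Wm p t) ≠ (fun p => Wp p t)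
  no_dup : ∀ t t' : T, (fun p => Wm p t) = (fun p => Wm p t') →
      (fun p => Wp p t) = (fun p => Wp p t') → t = t'
  /-- the bag associated with each place -/
  bag : P → P → ℕ
  /-- the layer of each place -/
  layer : P → ℕ
  bag_isBag : ∀ p, IsBag Wm Wp (bag p)
  bag_surj : ∀ b, IsBag Wm Wp b → ∃ p, bag p = b
  bag_inj : Function.Injective bag
  bag_self : ∀ p, bag p p = 1
  layer_pos : ∀ p, 1 ≤ layer p
  layer_le : ∀ p, layer p ≤ Nn
  layer_surj : ∀ i, 1 ≤ i → i ≤ Nn → ∃ p, layer p = i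
  edge_layer : ∀ p q : P, BagEdge Wm Wp (bag p) (bag q) → layer p = layer q
  layer_conn : ∀ p q : P, layer p = layer q →
      Relation.ReflTransGen (BagEdge Wm Wp) (bag p) (bag q)
  resource : ∀ p q : P, q ≠ p → 0 < bag p q →
      layer q + 1 = layer p ∧ ∀ r, layer r = layer q → potOf bag r ≤ potOf bag q

namespace ClosedPi3

variable {P T : Type} [Fintype P] [Fintype T] {Nn : ℕ} (C : ClosedPi3 P T Nn)

def pot (p : P) : ℕ := potOf C.bag p

/-- `P_i`: the places of layer `i`. -/
def places (i : ℕ) : Finset P := Finset.univ.filter (fun p => C.layer p = i)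

/-- `POT_i`: the maximal potential in layer `i`. -/
def POT (i : ℕ) : ℕ := (C.places i).sup C.pot

/-- `P_i^max`: the places of maximal potential in layer `i`. -/
def placesMax (i : ℕ) : Finset P := (C.places i).filter (fun p => C.pot p = C.POT i)

/-- `cin(p) = POT_i − pot(p)` for `p ∈ P_i`. -/
def cin (p : P) : ℤ := (C.POT (C.layer p) : ℤ) - (C.pot p : ℤ)

/-- The invariant vector `v^(i)` (for `i = Nn` this is `v^(N)`). -/
def vvec (i : ℕ) : P → ℤ :=
  if i = Nn then (fun p => if C.layer p = Nn then 1 else 0)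
  else fun p => (if C.layer p = i then 1 else 0) + (if C.layer p = i + 1 then C.cin p else 0)

/-- `m · v^(i)`. -/
def vdot (i : ℕ) (m : P → ℕ) : ℤ := ∑ p, C.vvec i p * (m p : ℤ)

/-- `m ∈ Inv_i(m0)`. -/
def InvSet (m0 : P → ℕ) (i : ℕ) (m : P → ℕ) : Prop := C.vdot i m = C.vdot i m0

/-- `m ∈ Live_i`. -/
def LiveSet (i : ℕ) (m : P → ℕ) : Prop :=
  if i = Nn then 0 < ∑ p ∈ C.places Nn, m p
  else minPotD ((C.places (i + 1)).filter (fun p => 0 < m p)) C.pot (C.POT (i + 1))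
        ≤ ∑ p ∈ C.places i, m p

/-- `t` belongs to `⋃ {T_i | S i}`: the input bag of `t` lies in a layer satisfying `S`. -/
def transIn (S : ℕ → Prop) (t : T) : Prop :=
  ∃ p, S (C.layer p) ∧ C.bag p = (fun q => C.Wm q t)

/-- The marking `m` is `i`-live. -/
def iLive (i : ℕ) (m : P → ℕ) : Prop :=
  ∀ t, C.transIn (· ≤ i) t →
    ∃ m', ReachIn C.Wm C.Wp (C.transIn (· ≤ i)) m m' ∧ Enabled C.Wm m' t

end ClosedPi3

/-- An `Nn`-layer open Π³-net over places `P`: it is obtained from an `Nn`-layer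
closed Π³-net over `Option P` by deleting the place `none` (a.k.a. `p_ext`),
which lies in layer `Nn`. -/
structure OpenPi3 (P T : Type) [Fintype P] [Fintype T] (Nn : ℕ) where
  closed : ClosedPi3 (Option P) T Nn
  pext_layer : closed.layer none = Nn

namespace OpenPi3

variable {P T : Type} [Fintype P] [Fintype T] {Nn : ℕ} (O : OpenPi3 P T Nn)

/-- Backward incidence matrix of the open net. -/
def Wm : P → T → ℕ := fun p t => O.closed.Wm (some p) t

/-- Forward incidence matrix of the open net. -/
def Wp : P → T → ℕ := fun p t => O.closed.Wp (some p) t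

def layer (p : P) : ℕ := O.closed.layer (some p)

def pot (p : P) : ℕ := O.closed.pot (some p)

/-- `pot(p_ext)`. -/
def potExt : ℕ := O.closed.pot none

/-- `P_i`: the (remaining) places of layer `i`. -/
def places (i : ℕ) : Finset P := Finset.univ.filter (fun p => O.layer p = i)

/-- `POT_i`, with `POT_N = pot(p_ext)` for open nets. -/
def POT (i : ℕ) : ℕ := if i = Nn then O.potExt else (O.places i).sup O.pot

def placesMax (i : ℕ) : Finset P := (O.places i).filter (fun p => O.pot p = O.POT i)

def cin (p : P) : ℤ := (O.POT (O.layer p) : ℤ) - (O.pot p : ℤ)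

/-- The invariant vector `v^(i)` (used for `1 ≤ i ≤ Nn − 1`). -/
def vvec (i : ℕ) : P → ℤ :=
  fun p => (if O.layer p = i then 1 else 0) + (if O.layer p = i + 1 then O.cin p else 0)

def vdot (i : ℕ) (m : P → ℕ) : ℤ := ∑ p, O.vvec i p * (m p : ℤ)

def InvSet (m0 : P → ℕ) (i : ℕ) (m : P → ℕ) : Prop :=
  if i = Nn then True else O.vdot i m = O.vdot i m0

/-- `m ∈ Live_i` for the open net: for `i = N − 1` the virtual place `p_ext`
always counts as marked. -/
def LiveSet (i : ℕ) (m : P → ℕ) : Prop :=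
  if i = Nn then True
  else if i + 1 = Nn then
    min O.potExt
        (minPotD ((O.places Nn).filter (fun p => 0 < m p)) O.pot O.potExt)
      ≤ ∑ p ∈ O.places i, m p
  else
    minPotD ((O.places (i + 1)).filter (fun p => 0 < m p)) O.pot (O.POT (i + 1))
      ≤ ∑ p ∈ O.places i, m p

def transIn (S : ℕ → Prop) (t : T) : Prop := O.closed.transIn S t

def iLive (i : ℕ) (m : P → ℕ) : Prop :=
  ∀ t, O.transIn (· ≤ i) t →
    ∃ m', ReachIn O.Wm O.Wp (O.transIn (· ≤ i)) m m' ∧ Enabled O.Wm m' t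

end OpenPi3
namespace Pi3Aux

open Finset
open scoped Classical

variable {P T : Type} [Fintype P] [Fintype T] {Nn : ℕ}

/-- restriction of a closed bag to the open places -/
def bagr (O : OpenPi3 P T Nn) (c : Option P) : P → ℕ := fun p => O.closed.bag c (some p)

/-- total number of tokens in layer `j` -/
def Lsum (O : OpenPi3 P T Nn) (j : ℕ) (m : P → ℕ) : ℕ := ∑ p ∈ O.places j, m p

variable (O : OpenPi3 P T Nn)

lemma pot_def (c : Option P) : O.closed.pot c = (∑ q, O.closed.bag c q) - 1 := rfl

lemma one_le_sum_bag (c : Option P) : 1 ≤ ∑ q, O.closed.bag c q := by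
  have h := Finset.single_le_sum (f := O.closed.bag c) (fun q _ => Nat.zero_le _) (mem_univ c)
  rw [O.closed.bag_self c] at h
  exact h

lemma sum_bag (c : Option P) : ∑ q, O.closed.bag c q = 1 + O.closed.pot c := by
  have := one_le_sum_bag O c
  rw [pot_def]
  omega

lemma supp_cases {c q : Option P} (h : 0 < O.closed.bag c q) :
    q = c ∨ (O.closed.layer q + 1 = O.closed.layer c ∧
      ∀ r, O.closed.layer r = O.closed.layer q → O.closed.pot r ≤ O.closed.pot q) := by
  by_cases hq : q = c
  · exact Or.inl hq
  · exact Or.inr (O.closed.resource c q hq h)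

lemma layer_some (p : P) : O.layer p = O.closed.layer (some p) := rfl

lemma pot_some (p : P) : O.pot p = O.closed.pot (some p) := rfl

lemma layer_none : O.closed.layer none = Nn := O.pext_layer

include O in
lemma one_le_Nn : 1 ≤ Nn := by
  have h := O.closed.layer_pos none
  rw [layer_none O] at h
  exact h

lemma mem_places {p : P} {j : ℕ} : p ∈ O.places j ↔ O.layer p = j := by
  simp [OpenPi3.places]

lemma places_zero : O.places 0 = ∅ := by
  ext p
  simp only [mem_places, Finset.notMem_empty, iff_false]
  have := O.closed.layer_pos (some p)
  rw [← layer_some] at this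
  omega

lemma bagr_self' (p : P) : bagr O (some p) p = 1 := O.closed.bag_self (some p)

lemma bagr_eq_zero {c : Option P} {p : P} (h1 : some p ≠ c)
    (h2 : O.closed.layer (some p) + 1 ≠ O.closed.layer c) : bagr O c p = 0 := by
  by_contra h
  rcases supp_cases O (Nat.pos_of_ne_zero h) with h' | ⟨h', _⟩
  · exact h1 h'
  · exact h2 h'

lemma bag_none_of_some (c0 : P) : O.closed.bag (some c0) none = 0 := by
  by_contra h
  rcases supp_cases O (Nat.pos_of_ne_zero h) with h' | ⟨h', _⟩
  · exact absurd h' (by simp)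
  · rw [layer_none] at h'
    have := O.closed.layer_le (some c0)
    omega

lemma sum_bagr_univ_some (c0 : P) :
    ∑ p : P, bagr O (some c0) p = 1 + O.closed.pot (some c0) := by
  have h := sum_bag O (some c0)
  rw [Fintype.sum_option, bag_none_of_some] at h
  simpa [bagr] using h

lemma sum_bagr_univ_none :
    ∑ p : P, bagr O none p = O.closed.pot none := by
  have h := sum_bag O none
  rw [Fintype.sum_option, O.closed.bag_self none] at h
  have : ∑ p : P, bagr O none p = O.closed.pot none := by
    unfold bagr; omega
  exact this

/-- sum of a restricted bag over its own layer -/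
lemma sum_bagr_layer_self_some {c0 : P} {j : ℕ} (hc : O.closed.layer (some c0) = j) :
    ∑ p ∈ O.places j, bagr O (some c0) p = 1 := by
  rw [Finset.sum_eq_single c0]
  · exact bagr_self' O c0
  · intro b hb hbne
    apply bagr_eq_zero O (by simpa using hbne)
    have hb2 : O.closed.layer (some b) = j := (mem_places O).mp hb
    omega
  · intro h
    exact absurd ((mem_places O).mpr hc) h

lemma sum_bagr_layer_self_none {j : ℕ} (hc : O.closed.layer (none : Option P) = j) :
    ∑ p ∈ O.places j, bagr O none p = 0 := by
  apply Finset.sum_eq_zero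
  intro p hp
  have hp2 : O.closed.layer (some p) = j := (mem_places O).mp hp
  have hle := O.closed.layer_le (some p)
  have hn : O.closed.layer (none : Option P) = Nn := layer_none O
  apply bagr_eq_zero O (by simp)
  omega

/-- sum of a restricted bag over the layer below: the potential -/
lemma sum_bagr_supp {c : Option P} {j i : ℕ} (hc : O.closed.layer c = j) (hij : i + 1 = j) :
    ∑ p ∈ O.places i, bagr O c p = O.closed.pot c := by
  classical
  have hsplit := Finset.sum_filter_add_sum_filter_not Finset.univ
    (fun p => O.layer p = i) (bagr O c)
  have hpl : O.places i = Finset.univ.filter (fun p => O.layer p = i) := rfl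
  rcases c with _ | c0
  · have hrest : ∑ p ∈ Finset.univ.filter (fun p => ¬ O.layer p = i), bagr O (none : Option P) p = 0 := by
      apply Finset.sum_eq_zero
      intro p hp
      simp only [Finset.mem_filter] at hp
      apply bagr_eq_zero O (by simp)
      have : O.closed.layer (some p) = O.layer p := rfl
      omega
    have huniv := sum_bagr_univ_none O
    rw [hpl]
    omega
  · have hrest : ∑ p ∈ Finset.univ.filter (fun p => ¬ O.layer p = i), bagr O (some c0) p = 1 := by
      rw [Finset.sum_eq_single c0]
      · exact bagr_self' O c0
      · intro b hb hbne
        simp only [Finset.mem_filter] at hb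
        apply bagr_eq_zero O (by simpa using hbne)
        have : O.closed.layer (some b) = O.layer b := rfl
        omega
      · intro h
        simp only [Finset.mem_filter, Finset.mem_univ, true_and] at h
        exfalso
        apply h
        have : O.layer c0 = O.closed.layer (some c0) := rfl
        omega
    have huniv := sum_bagr_univ_some O c0
    rw [hpl]
    omega

lemma sum_bagr_other {c : Option P} {j i : ℕ} (hc : O.closed.layer c = j)
    (h1 : i ≠ j) (h2 : i + 1 ≠ j) :
    ∑ p ∈ O.places i, bagr O c p = 0 := by
  apply Finset.sum_eq_zero
  intro p hp
  rw [mem_places] at hp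
  apply bagr_eq_zero O
  · intro habs
    rw [← habs] at hc
    rw [← layer_some O p] at hc
    omega
  · rw [hc, ← layer_some O p, hp]
    omega

/-! ### Steps and paths -/

lemma open_Wm_eq {t : T} {a : Option P}
    (h : O.closed.bag a = fun q => O.closed.Wm q t) (p : P) :
    O.Wm p t = bagr O a p := (congrFun h (some p)).symm

lemma open_Wp_eq {t : T} {b : Option P}
    (h : O.closed.bag b = fun q => O.closed.Wp q t) (p : P) :
    O.Wp p t = bagr O b p := (congrFun h (some p)).symm

lemma step_move {t : T} {a b : Option P} {m : P → ℕ}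
    (ha : O.closed.bag a = fun q => O.closed.Wm q t)
    (hb : O.closed.bag b = fun q => O.closed.Wp q t)
    (hen : ∀ p, bagr O a p ≤ m p) :
    Step O.Wm O.Wp m (fun p => m p - bagr O a p + bagr O b p) := by
  refine ⟨t, fun p => ?_, ?_⟩
  · rw [open_Wm_eq O ha p]; exact hen p
  · funext p
    show m p - bagr O a p + bagr O b p = m p - O.Wm p t + O.Wp p t
    rw [open_Wm_eq O ha p, open_Wp_eq O hb p]

lemma exists_inbag (t : T) : ∃ a, O.closed.bag a = fun q => O.closed.Wm q t :=
  O.closed.bag_surj _ ⟨t, Or.inl rfl⟩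

lemma exists_outbag (t : T) : ∃ b, O.closed.bag b = fun q => O.closed.Wp q t :=
  O.closed.bag_surj _ ⟨t, Or.inr rfl⟩

lemma path_move {x y : Option P → ℕ}
    (hp : Relation.ReflTransGen (BagEdge O.closed.Wm O.closed.Wp) x y) :
    ∀ a b : Option P, O.closed.bag a = x → O.closed.bag b = y →
    ∀ m : P → ℕ, (∀ p, bagr O a p ≤ m p) →
      Reach O.Wm O.Wp m (fun p => m p - bagr O a p + bagr O b p) := by
  induction hp using Relation.ReflTransGen.head_induction_on with
  | refl =>
    intro a b hax hbx m hm
    have hab : a = b := O.closed.bag_inj (hax.trans hbx.symm)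
    subst hab
    have : (fun p => m p - bagr O a p + bagr O a p) = m := by
      funext p; exact Nat.sub_add_cancel (hm p)
    rw [this]
    exact Relation.ReflTransGen.refl
  | @head x c hedge _hp ih =>
    intro a b hax hby m hm
    obtain ⟨t, htm, htp⟩ := hedge
    obtain ⟨c', hc'⟩ := exists_outbag O t
    have hstep : Step O.Wm O.Wp m (fun p => m p - bagr O a p + bagr O c' p) :=
      step_move O (by rw [hax, htm]) hc' hm
    have hc'c : O.closed.bag c' = c := by rw [hc', htp]
    have hrest := ih c' b hc'c hby (fun p => m p - bagr O a p + bagr O c' p)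
      (fun p => Nat.le_add_left _ _)
    have heq : (fun p => (m p - bagr O a p + bagr O c' p) - bagr O c' p + bagr O b p)
        = (fun p => m p - bagr O a p + bagr O b p) := by
      funext p; rw [Nat.add_sub_cancel]
    rw [heq] at hrest
    exact Relation.ReflTransGen.head hstep hrest

/-- moving a token between two places of the same layer -/
lemma move {a b : Option P} (hl : O.closed.layer a = O.closed.layer b) {m : P → ℕ}
    (hm : ∀ p, bagr O a p ≤ m p) :
    Reach O.Wm O.Wp m (fun p => m p - bagr O a p + bagr O b p) :=
  path_move O (O.closed.layer_conn a b hl) a b rfl rfl m hm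

/-- every closed place has an outgoing transition -/
lemma exists_out_trans (d : Option P) :
    ∃ t, O.closed.bag d = fun q => O.closed.Wm q t := by
  obtain ⟨t1, h1⟩ := O.closed.bag_isBag d
  rcases h1 with h1 | h1
  · exact ⟨t1, h1⟩
  · obtain ⟨a1, ha1⟩ := exists_inbag O t1
    have hedge : BagEdge O.closed.Wm O.closed.Wp (O.closed.bag a1) (O.closed.bag d) :=
      ⟨t1, ha1, h1⟩
    have hlay : O.closed.layer a1 = O.closed.layer d := O.closed.edge_layer a1 d hedge
    have hpath := O.closed.layer_conn d a1 hlay.symm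
    rcases (Relation.ReflTransGen.cases_head hpath) with heq | ⟨mid, hedge2, _⟩
    · exfalso
      have : a1 = d := O.closed.bag_inj heq.symm
      subst this
      exact O.closed.no_useless t1 (ha1.symm.trans h1)
    · obtain ⟨t2, ht2, _⟩ := hedge2
      exact ⟨t2, ht2⟩

/-- bookkeeping: layer sums under a move -/
lemma Lsum_move {a b : Option P} {m : P → ℕ} (hm : ∀ p, bagr O a p ≤ m p) (i : ℕ) :
    Lsum O i (fun p => m p - bagr O a p + bagr O b p) + ∑ p ∈ O.places i, bagr O a p
      = Lsum O i m + ∑ p ∈ O.places i, bagr O b p := by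
  unfold Lsum
  rw [← Finset.sum_add_distrib, ← Finset.sum_add_distrib]
  apply Finset.sum_congr rfl
  intro p _
  have := hm p
  omega

/-! ### Invariance of `vdot` -/

lemma vdot_split (i : ℕ) (x : P → ℤ) :
    ∑ p, O.vvec i p * x p
      = (∑ p ∈ O.places i, x p) + ∑ p ∈ O.places (i + 1), O.cin p * x p := by
  simp only [OpenPi3.vvec, add_mul, ite_mul, one_mul, zero_mul]
  rw [Finset.sum_add_distrib]
  congr 1
  · simp [OpenPi3.places, Finset.sum_filter]
  · simp [OpenPi3.places, Finset.sum_filter]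

lemma pot_max_eq_POT {p : P} {j : ℕ} (hj : j ≠ Nn) (hl : O.layer p = j)
    (hmax : ∀ r, O.closed.layer r = j → O.closed.pot r ≤ O.closed.pot (some p)) :
    O.POT j = O.pot p := by
  rw [OpenPi3.POT, if_neg hj]
  apply le_antisymm
  · apply Finset.sup_le
    intro r hr
    exact hmax (some r) ((mem_places O).mp hr)
  · exact Finset.le_sup ((mem_places O).mpr hl)

lemma cin_max_zero {p : P} {j : ℕ} (hj : j ≠ Nn) (hl : O.layer p = j)
    (hmax : ∀ r, O.closed.layer r = j → O.closed.pot r ≤ O.closed.pot (some p)) :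
    O.cin p = 0 := by
  rw [OpenPi3.cin, hl, pot_max_eq_POT O hj hl hmax]
  exact sub_self _

lemma cin_nonneg {p : P} (hj : O.layer p ≠ Nn) : 0 ≤ O.cin p := by
  rw [OpenPi3.cin, OpenPi3.POT, if_neg hj]
  have h : O.pot p ≤ (O.places (O.layer p)).sup O.pot :=
    Finset.le_sup ((mem_places O).mpr rfl)
  have := sub_nonneg.mpr (Int.ofNat_le.mpr h)
  exact_mod_cast this

lemma bag_dot {i : ℕ} (h2 : i + 1 ≤ Nn) (c : Option P) :
    ∑ p, O.vvec i p * (bagr O c p : ℤ)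
      = if O.closed.layer c = i then 1
        else if O.closed.layer c = i + 1 then (O.POT (i+1) : ℤ) else 0 := by
  rw [vdot_split]
  have hle := O.closed.layer_le c
  by_cases hji : O.closed.layer c = i
  · rw [if_pos hji]
    rcases c with _ | c0
    · exfalso; rw [layer_none O] at hji; omega
    · have hA : ∑ p ∈ O.places i, (bagr O (some c0) p : ℤ) = 1 := by
        rw [← Nat.cast_sum, sum_bagr_layer_self_some O hji, Nat.cast_one]
      have hB : ∑ p ∈ O.places (i+1), O.cin p * (bagr O (some c0) p : ℤ) = 0 := by
        apply Finset.sum_eq_zero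
        intro p hp
        have hp2 : O.closed.layer (some p) = i + 1 := (mem_places O).mp hp
        have : bagr O (some c0) p = 0 := by
          apply bagr_eq_zero O
          · intro habs
            rw [habs] at hp2; omega
          · omega
        rw [this, Nat.cast_zero, mul_zero]
      rw [hA, hB, add_zero]
  · by_cases hji1 : O.closed.layer c = i + 1
    · rw [if_neg hji, if_pos hji1]
      have hA : ∑ p ∈ O.places i, (bagr O c p : ℤ) = (O.closed.pot c : ℤ) := by
        rw [← Nat.cast_sum, sum_bagr_supp O hji1 rfl]
      rcases c with _ | c0
      · have hB : ∑ p ∈ O.places (i+1), O.cin p * (bagr O none p : ℤ) = 0 := by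
          apply Finset.sum_eq_zero
          intro p hp
          have hp2 : O.closed.layer (some p) = i + 1 := (mem_places O).mp hp
          have hn : O.closed.layer (none : Option P) = Nn := layer_none O
          have : bagr O none p = 0 := by
            apply bagr_eq_zero O (by simp)
            omega
          rw [this, Nat.cast_zero, mul_zero]
        rw [hA, hB, add_zero]
        have hNn : i + 1 = Nn := by rw [← hji1, layer_none O]
        rw [OpenPi3.POT, if_pos hNn]
        rfl
      · have hlc : O.layer c0 = i + 1 := hji1
        have hB : ∑ p ∈ O.places (i+1), O.cin p * (bagr O (some c0) p : ℤ) = O.cin c0 := by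
          rw [Finset.sum_eq_single c0]
          · rw [bagr_self' O c0, Nat.cast_one, mul_one]
          · intro b hb hbne
            have hb2 : O.closed.layer (some b) = i + 1 := (mem_places O).mp hb
            have : bagr O (some c0) b = 0 := by
              apply bagr_eq_zero O (by simpa using hbne)
              omega
            rw [this, Nat.cast_zero, mul_zero]
          · intro h
            exact absurd ((mem_places O).mpr hlc) h
        rw [hA, hB, OpenPi3.cin, hlc]
        have : O.pot c0 = O.closed.pot (some c0) := rfl
        omega
    · rw [if_neg hji, if_neg hji1]
      have hA : ∑ p ∈ O.places i, (bagr O c p : ℤ) = 0 := by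
        rw [← Nat.cast_sum, sum_bagr_other O rfl (by omega) (by omega), Nat.cast_zero]
      have hB : ∑ p ∈ O.places (i+1), O.cin p * (bagr O c p : ℤ) = 0 := by
        apply Finset.sum_eq_zero
        intro p hp
        have hp2 : O.closed.layer (some p) = i + 1 := (mem_places O).mp hp
        by_cases hbz : bagr O c p = 0
        · rw [hbz, Nat.cast_zero, mul_zero]
        · rcases supp_cases O (Nat.pos_of_ne_zero hbz) with h' | ⟨h', hmax⟩
          · exfalso; rw [h'] at hp2; exact hji1 hp2
          · have hcl : O.closed.layer c = i + 2 := by omega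
            have hcin : O.cin p = 0 := by
              apply cin_max_zero O (j := i + 1) (by omega) hp2
              intro r hr
              exact hmax r (by rw [hp2]; exact hr)
            rw [hcin, zero_mul]
      rw [hA, hB, add_zero]

lemma vdot_step {i : ℕ} (h2 : i + 1 ≤ Nn) {m m' : P → ℕ}
    (hs : Step O.Wm O.Wp m m') : O.vdot i m' = O.vdot i m := by
  obtain ⟨t, hen, rfl⟩ := hs
  obtain ⟨a, ha⟩ := exists_inbag O t
  obtain ⟨b, hb⟩ := exists_outbag O t
  have hen' : ∀ p, bagr O a p ≤ m p := fun p => by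
    rw [← open_Wm_eq O ha p]; exact hen p
  have hfeq : Fire O.Wm O.Wp m t = fun p => m p - bagr O a p + bagr O b p := by
    funext p
    show m p - O.Wm p t + O.Wp p t = _
    rw [open_Wm_eq O ha p, open_Wp_eq O hb p]
  rw [hfeq]
  have hlay : O.closed.layer a = O.closed.layer b := O.closed.edge_layer a b ⟨t, ha, hb⟩
  show ∑ p, O.vvec i p * (((fun p => m p - bagr O a p + bagr O b p) p : ℕ) : ℤ)
      = ∑ p, O.vvec i p * (m p : ℤ)
  calc ∑ p, O.vvec i p * (((fun p => m p - bagr O a p + bagr O b p) p : ℕ) : ℤ)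
      = ∑ p, (O.vvec i p * (m p : ℤ) - O.vvec i p * (bagr O a p : ℤ)
          + O.vvec i p * (bagr O b p : ℤ)) := by
        apply Finset.sum_congr rfl
        intro p _
        have h3 := hen' p
        have hcast : (((m p - bagr O a p + bagr O b p : ℕ)) : ℤ)
            = (m p : ℤ) - (bagr O a p : ℤ) + (bagr O b p : ℤ) := by omega
        simp only []
        rw [hcast]
        ring
    _ = (∑ p, O.vvec i p * (m p : ℤ)) - (∑ p, O.vvec i p * (bagr O a p : ℤ))
          + ∑ p, O.vvec i p * (bagr O b p : ℤ) := by
        rw [Finset.sum_add_distrib, Finset.sum_sub_distrib]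
    _ = ∑ p, O.vvec i p * (m p : ℤ) := by
        rw [bag_dot O h2 a, bag_dot O h2 b, hlay]
        ring

lemma vdot_reach {i : ℕ} (h2 : i + 1 ≤ Nn) {m m' : P → ℕ}
    (hr : Reach O.Wm O.Wp m m') : O.vdot i m' = O.vdot i m := by
  induction hr with
  | refl => rfl
  | tail _ hstep ih => rw [vdot_step O h2 hstep, ih]

/-! ### The bound when all cin are positive -/

lemma potExt_zero_of_Nn_one (hNn : Nn = 1) : O.closed.pot none = 0 := by
  have h := sum_bagr_supp O (c := (none : Option P)) (j := Nn) (i := 0) (layer_none O) (by omega)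
  rw [places_zero O, Finset.sum_empty] at h
  exact h.symm

lemma two_le_Nn (hP : Nonempty P) (hcin : ∀ q ∈ O.places Nn, 0 < O.cin q) : 2 ≤ Nn := by
  by_contra h
  have h1 := one_le_Nn O
  have hNn : Nn = 1 := by omega
  obtain ⟨p⟩ := hP
  have hl1 := O.closed.layer_pos (some p)
  have hl2 := O.closed.layer_le (some p)
  have hlp : O.layer p = Nn := by rw [layer_some]; omega
  have hc := hcin p ((mem_places O).mpr hlp)
  rw [OpenPi3.cin, hlp, OpenPi3.POT, if_pos rfl] at hc
  have h0 : O.potExt = 0 := potExt_zero_of_Nn_one O hNn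
  rw [h0] at hc
  have : (0 : ℤ) ≤ (O.pot p : ℤ) := Int.natCast_nonneg _
  omega

lemma sum_vdot_eq (m : P → ℕ) :
    ∑ i ∈ Finset.Icc 1 (Nn - 1), O.vdot i m
      = ∑ p, (∑ i ∈ Finset.Icc 1 (Nn - 1), O.vvec i p) * (m p : ℤ) := by
  unfold OpenPi3.vdot
  rw [Finset.sum_comm]
  apply Finset.sum_congr rfl
  intro p _
  rw [Finset.sum_mul]

lemma weight_ge_one (hNn2 : 2 ≤ Nn) (hcin : ∀ q ∈ O.places Nn, 0 < O.cin q) (p : P) :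
    1 ≤ ∑ i ∈ Finset.Icc 1 (Nn - 1), O.vvec i p := by
  have hl1 := O.closed.layer_pos (some p)
  have hl2 := O.closed.layer_le (some p)
  have hlsome : O.layer p = O.closed.layer (some p) := rfl
  have hcnn : 0 ≤ O.cin p := by
    by_cases hln : O.layer p = Nn
    · exact le_of_lt (hcin p ((mem_places O).mpr hln))
    · exact cin_nonneg O hln
  have hnonneg : ∀ i ∈ Finset.Icc 1 (Nn - 1), 0 ≤ O.vvec i p := by
    intro i _
    unfold OpenPi3.vvec
    have h1 : (0:ℤ) ≤ if O.layer p = i then 1 else 0 := by positivity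
    have h2 : (0:ℤ) ≤ if O.layer p = i + 1 then O.cin p else 0 := by
      by_cases h : O.layer p = i + 1
      · rw [if_pos h]; exact hcnn
      · rw [if_neg h]
    omega
  by_cases hln : O.layer p = Nn
  · have hmem : Nn - 1 ∈ Finset.Icc 1 (Nn - 1) := by
      rw [Finset.mem_Icc]; omega
    have hval : O.vvec (Nn - 1) p = O.cin p := by
      unfold OpenPi3.vvec
      rw [if_neg (by omega), if_pos (by omega)]
      simp
    have hge := Finset.single_le_sum hnonneg hmem
    rw [hval] at hge
    have := hcin p ((mem_places O).mpr hln)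
    omega
  · have hmem : O.layer p ∈ Finset.Icc 1 (Nn - 1) := by
      rw [Finset.mem_Icc]; omega
    have hval : O.vvec (O.layer p) p = 1 := by
      unfold OpenPi3.vvec
      rw [if_pos rfl, if_neg (by omega)]
      simp
    have hge := Finset.single_le_sum hnonneg hmem
    rw [hval] at hge
    exact hge

lemma bound_sum (m0 : P → ℕ) (hcin : ∀ q ∈ O.places Nn, 0 < O.cin q) {m : P → ℕ}
    (hr : Reach O.Wm O.Wp m0 m) :
    (∑ p, (m p : ℤ)) ≤ ∑ i ∈ Finset.Icc 1 (Nn - 1), O.vdot i m0 := by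
  rcases isEmpty_or_nonempty P with hP | hP
  · simp [OpenPi3.vdot]
  · have hNn2 : 2 ≤ Nn := two_le_Nn O hP hcin
    calc ∑ p, (m p : ℤ)
        ≤ ∑ p, (∑ i ∈ Finset.Icc 1 (Nn - 1), O.vvec i p) * (m p : ℤ) := by
          apply Finset.sum_le_sum
          intro p _
          exact le_mul_of_one_le_left (Int.natCast_nonneg _) (weight_ge_one O hNn2 hcin p)
      _ = ∑ i ∈ Finset.Icc 1 (Nn - 1), O.vdot i m := (sum_vdot_eq O m).symm
      _ = ∑ i ∈ Finset.Icc 1 (Nn - 1), O.vdot i m0 := by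
          apply Finset.sum_congr rfl
          intro i hi
          rw [Finset.mem_Icc] at hi
          exact vdot_reach O (by omega) hr

lemma bounded_of_cin (m0 : P → ℕ) (hcin : ∀ q ∈ O.places Nn, 0 < O.cin q) :
    ∃ B : ℕ, ∀ m : P → ℕ, Reach O.Wm O.Wp m0 m → ∑ p, m p ≤ B := by
  refine ⟨(∑ i ∈ Finset.Icc 1 (Nn - 1), O.vdot i m0).toNat, fun m hr => ?_⟩
  have h := bound_sum O m0 hcin hr
  have hc : ((∑ p, m p : ℕ) : ℤ) = ∑ p, (m p : ℤ) := Nat.cast_sum _ _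
  omega

/-! ### Liveness forces lower layers to be populated -/

lemma fire_eq {t : T} {a b : Option P}
    (ha : O.closed.bag a = fun q => O.closed.Wm q t)
    (hb : O.closed.bag b = fun q => O.closed.Wp q t) (m : P → ℕ) :
    Fire O.Wm O.Wp m t = fun p => m p - bagr O a p + bagr O b p := by
  funext p
  show m p - O.Wm p t + O.Wp p t = _
  rw [open_Wm_eq O ha p, open_Wp_eq O hb p]

lemma lemmaL (m0 : P → ℕ) (hlive : LiveMarked O.Wm O.Wp m0) {m : P → ℕ}
    (hm : Reach O.Wm O.Wp m0 m) {j : ℕ} (hj1 : 1 ≤ j) (hj2 : j + 1 ≤ Nn)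
    {c : P} (hc : O.layer c = j) (hcm : 0 < m c) :
    ∃ cs : P, O.layer cs = j ∧ 0 < m cs ∧
      (∀ c', O.layer c' = j → 0 < m c' → O.pot cs ≤ O.pot c') ∧
      O.pot cs ≤ Lsum O (j - 1) m := by
  classical
  set S := (O.places j).filter (fun p => 0 < m p) with hS
  have hne : S.Nonempty := ⟨c, by simp [hS, Finset.mem_filter, (mem_places O).mpr hc, hcm]⟩
  obtain ⟨cs, hcsS, hcsmin⟩ := Finset.exists_min_image S O.pot hne
  simp only [hS, Finset.mem_filter] at hcsS
  have hcs1 : O.layer cs = j := (mem_places O).mp hcsS.1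
  have hcs2 : 0 < m cs := hcsS.2
  have hmin : ∀ c', O.layer c' = j → 0 < m c' → O.pot cs ≤ O.pot c' := by
    intro c' h1 h2
    exact hcsmin c' (by simp [hS, Finset.mem_filter, (mem_places O).mpr h1, h2])
  refine ⟨cs, hcs1, hcs2, hmin, ?_⟩
  by_contra hlt
  push_neg at hlt
  set Bad : (P → ℕ) → Prop := fun m' =>
    Lsum O (j - 1) m' < O.pot cs ∧
      ∀ p, O.layer p = j → 0 < m' p → O.pot cs ≤ O.pot p with hBad
  have hblock : ∀ m' t (a : Option P), Bad m' →
      O.closed.bag a = (fun q => O.closed.Wm q t) → O.closed.layer a = j →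
      ¬ Enabled O.Wm m' t := by
    intro m' t a hbad ha hla hen
    rcases a with _ | a0
    · rw [layer_none O] at hla; omega
    · have hen' : ∀ p, bagr O (some a0) p ≤ m' p := fun p => by
        rw [← open_Wm_eq O ha p]; exact hen p
      have hm0 : 0 < m' a0 :=
        lt_of_lt_of_le (by rw [bagr_self' O a0]; omega) (hen' a0)
      have hpot : O.pot cs ≤ O.pot a0 := hbad.2 a0 hla hm0
      have hsum : O.closed.pot (some a0) ≤ Lsum O (j - 1) m' := by
        calc O.closed.pot (some a0)
            = ∑ p ∈ O.places (j-1), bagr O (some a0) p :=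
              (sum_bagr_supp O hla (by omega)).symm
          _ ≤ Lsum O (j-1) m' := Finset.sum_le_sum (fun p _ => hen' p)
      have hre : O.pot a0 = O.closed.pot (some a0) := rfl
      have := hbad.1
      omega
  have hpres : ∀ m1 m2, Step O.Wm O.Wp m1 m2 → Bad m1 → Bad m2 := by
    intro m1 m2 hstep hbad
    obtain ⟨t, hen, rfl⟩ := hstep
    obtain ⟨a, ha⟩ := exists_inbag O t
    obtain ⟨b, hb⟩ := exists_outbag O t
    have hen' : ∀ p, bagr O a p ≤ m1 p := fun p => by
      rw [← open_Wm_eq O ha p]; exact hen p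
    rw [fire_eq O ha hb m1]
    have hlay : O.closed.layer a = O.closed.layer b := O.closed.edge_layer a b ⟨t, ha, hb⟩
    have hja : O.closed.layer a ≠ j := fun h => hblock m1 t a hbad ha h hen
    constructor
    · have hmove := Lsum_move O (b := b) hen' (j - 1)
      have hSab : ∑ p ∈ O.places (j-1), bagr O a p
          = ∑ p ∈ O.places (j-1), bagr O b p := by
        by_cases hj' : O.closed.layer a = j - 1
        · have hba : O.closed.layer b = j - 1 := by omega
          rcases a with _ | a0
          · exfalso; rw [layer_none O] at hj'; omega
          rcases b with _ | b0
          · exfalso; rw [layer_none O] at hba; omega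
          rw [sum_bagr_layer_self_some O hj', sum_bagr_layer_self_some O hba]
        · have h1 : j - 1 ≠ O.closed.layer a := fun h => hj' h.symm
          have h2 : (j - 1) + 1 ≠ O.closed.layer a := by omega
          have h1' : j - 1 ≠ O.closed.layer b := by omega
          have h2' : (j - 1) + 1 ≠ O.closed.layer b := by omega
          rw [sum_bagr_other O rfl h1 h2, sum_bagr_other O rfl h1' h2']
      have := hbad.1
      omega
    · intro p hp hpos
      have hpos' : 0 < m1 p - bagr O a p + bagr O b p := hpos
      by_cases hp1 : 0 < m1 p
      · exact hbad.2 p hp hp1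
      · have hz : m1 p = 0 := by omega
        have hab : bagr O a p ≤ m1 p := hen' p
        have hbp : 0 < bagr O b p := by omega
        rcases supp_cases O hbp with h' | ⟨h', hmax⟩
        · exfalso
          apply hja
          rw [hlay, ← h']
          exact hp
        · have hlp : O.closed.layer (some p) = j := hp
          have hcs' : O.closed.layer (some cs) = O.closed.layer (some p) := by
            rw [hlp]; exact hcs1
          exact hmax (some cs) hcs'
  have hbadall : ∀ m', Reach O.Wm O.Wp m m' → Bad m' := by
    intro m' hr
    induction hr with
    | refl => exact ⟨hlt, hmin⟩
    | tail _ hstep ih => exact hpres _ _ hstep ih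
  obtain ⟨d, hd⟩ := O.closed.layer_surj j hj1 (by omega)
  obtain ⟨t0, ht0⟩ := exists_out_trans O d
  obtain ⟨m', hm', hen'⟩ := hlive t0 m hm
  exact hblock m' t0 d (hbadall m' hm') ht0 hd hen'

/-! ### The rearrangement procedure -/

/-- `p` is a place of maximal potential among the closed places of layer `j`. -/
def IsMaxAt (O : OpenPi3 P T Nn) (j : ℕ) (p : P) : Prop :=
  ∀ r : Option P, O.closed.layer r = j → O.closed.pot r ≤ O.closed.pot (some p)

instance (j : ℕ) (p : P) : Decidable (IsMaxAt O j p) := by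
  unfold IsMaxAt; infer_instance

lemma bagr_same_layer {c0 p : P}
    (hc : O.closed.layer (some c0) = O.closed.layer (some p)) :
    bagr O (some c0) p = if p = c0 then 1 else 0 := by
  by_cases h : p = c0
  · subst h; rw [if_pos rfl]; exact bagr_self' O p
  · rw [if_neg h]
    apply bagr_eq_zero O (by simpa using h)
    omega

/-- the statement of the token-rearrangement procedure for layer `j` -/
def ProcStmt (O : OpenPi3 P T Nn) (m0 : P → ℕ) (j : ℕ) : Prop :=
  ∀ m τ : P → ℕ, Reach O.Wm O.Wp m0 m →
    (∀ p, 0 < τ p → O.closed.layer (some p) = j ∧ IsMaxAt O j p) →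
    (∑ p, τ p) ≤ Lsum O j m →
    ∃ m', Reach O.Wm O.Wp m m' ∧ (∀ p, j < O.layer p → m' p = m p) ∧
      Lsum O j m' = Lsum O j m ∧ (∀ p, τ p ≤ m' p)

lemma phase1 (m0 : P → ℕ) (hlive : LiveMarked O.Wm O.Wp m0) {j : ℕ}
    (hj1 : 1 ≤ j) (hj2 : j + 1 ≤ Nn) (IH : ∀ j', j' < j → ProcStmt O m0 j') :
    ∀ (k : ℕ) (m : P → ℕ), Reach O.Wm O.Wp m0 m →
      (∑ p ∈ (O.places j).filter (fun p => ¬ IsMaxAt O j p), m p) ≤ k →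
      ∃ m', Reach O.Wm O.Wp m m' ∧ (∀ p, j < O.layer p → m' p = m p) ∧
        Lsum O j m' = Lsum O j m ∧
        (∀ p, O.layer p = j → 0 < m' p → IsMaxAt O j p) := by
  intro k
  induction k with
  | zero =>
    intro m hm hjunk
    refine ⟨m, Relation.ReflTransGen.refl, fun p _ => rfl, rfl, ?_⟩
    intro p hp hpos
    by_contra hmax
    have hmem : p ∈ (O.places j).filter (fun p => ¬ IsMaxAt O j p) :=
      Finset.mem_filter.mpr ⟨(mem_places O).mpr hp, hmax⟩
    have := Finset.single_le_sum (f := m) (fun q _ => Nat.zero_le _) hmem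
    omega
  | succ k ih =>
    intro m hm hjunk
    by_cases hz : (∑ p ∈ (O.places j).filter (fun p => ¬ IsMaxAt O j p), m p) = 0
    · refine ⟨m, Relation.ReflTransGen.refl, fun p _ => rfl, rfl, ?_⟩
      intro p hp hpos
      by_contra hmax
      have hmem : p ∈ (O.places j).filter (fun p => ¬ IsMaxAt O j p) :=
        Finset.mem_filter.mpr ⟨(mem_places O).mpr hp, hmax⟩
      have := Finset.single_le_sum (f := m) (fun q _ => Nat.zero_le _) hmem
      omega
    · have hex : ∃ c, c ∈ (O.places j).filter (fun p => ¬ IsMaxAt O j p) ∧ 0 < m c := by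
        by_contra hno
        push_neg at hno
        apply hz
        apply Finset.sum_eq_zero
        intro p hp
        have := hno p hp
        omega
      obtain ⟨c, hcmem, hcpos⟩ := hex
      obtain ⟨hcpl, hcmax⟩ := Finset.mem_filter.mp hcmem
      have hcl : O.layer c = j := (mem_places O).mp hcpl
      obtain ⟨cs, hcs1, hcs2, hcsmin, hcsL⟩ := lemmaL O m0 hlive hm hj1 hj2 hcl hcpos
      have hcsmax : ¬ IsMaxAt O j cs := by
        intro hmaxcs
        apply hcmax
        intro r hr
        exact le_trans (hmaxcs r hr) (hcsmin c hcl hcpos)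
      have hnecl : ((Finset.univ : Finset (Option P)).filter
          (fun r => O.closed.layer r = j)).Nonempty :=
        ⟨some c, Finset.mem_filter.mpr ⟨Finset.mem_univ _, hcl⟩⟩
      obtain ⟨d, hdmem, hdmax⟩ := Finset.exists_max_image _ O.closed.pot hnecl
      have hdl : O.closed.layer d = j := (Finset.mem_filter.mp hdmem).2
      rcases d with _ | b0
      · exfalso; rw [layer_none O] at hdl; omega
      have hb0max : IsMaxAt O j b0 := by
        intro r hr
        exact hdmax r (Finset.mem_filter.mpr ⟨Finset.mem_univ _, hr⟩)
      have hb0l : O.layer b0 = j := hdl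
      -- recursive rearrangement of the layer below into the support of `bag cs`
      set τ' : P → ℕ := fun p => if p = cs then 0 else bagr O (some cs) p with hτ'
      have hsupp' : ∀ p, 0 < τ' p → O.closed.layer (some p) = j - 1 ∧ IsMaxAt O (j-1) p := by
        intro p hp
        rw [hτ'] at hp
        simp only [] at hp
        by_cases hpc : p = cs
        · rw [if_pos hpc] at hp; omega
        · rw [if_neg hpc] at hp
          rcases supp_cases O hp with h' | ⟨h', hmax⟩
          · exact absurd (Option.some_injective P h') hpc
          · have hcsj : O.closed.layer (some cs) = j := hcs1
            have hl' : O.closed.layer (some p) = j - 1 := by omega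
            refine ⟨hl', ?_⟩
            intro r hr
            exact hmax r (by omega)
      have hsum' : (∑ p, τ' p) ≤ Lsum O (j-1) m := by
        have h2 : ∀ p, τ' p + (if p = cs then 1 else 0) = bagr O (some cs) p := by
          intro p
          rw [hτ']
          simp only []
          by_cases hpc : p = cs
          · subst hpc; rw [if_pos rfl, if_pos rfl, bagr_self' O p]
          · rw [if_neg hpc, if_neg hpc, add_zero]
        have h1 : (∑ p, τ' p) + 1 = ∑ p, bagr O (some cs) p := by
          calc (∑ p, τ' p) + 1
              = ∑ p, (τ' p + if p = cs then 1 else 0) := by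
                rw [Finset.sum_add_distrib]
                congr 1
                rw [Finset.sum_ite_eq' Finset.univ cs (fun _ => 1)]
                simp
            _ = ∑ p, bagr O (some cs) p := Finset.sum_congr rfl (fun p _ => h2 p)
        have h3 := sum_bagr_univ_some O cs
        have hpcs : O.pot cs = O.closed.pot (some cs) := rfl
        omega
      obtain ⟨m1, hr1, hup1, hls1, hτ1⟩ := IH (j-1) (by omega) m τ' hm hsupp' hsum'
      have hlayj : ∀ p, O.layer p = j → m1 p = m p := fun p hp => hup1 p (by omega)
      have hen1 : ∀ p, bagr O (some cs) p ≤ m1 p := by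
        intro p
        by_cases hpc : p = cs
        · subst hpc
          rw [bagr_self' O p, hlayj p hcs1]
          exact hcs2
        · have h4 := hτ1 p
          rw [hτ'] at h4
          simp only [if_neg hpc] at h4
          exact h4
      have hmveq : O.closed.layer (some cs) = O.closed.layer (some b0) := by
        have e1 : O.closed.layer (some cs) = j := hcs1
        have e2 : O.closed.layer (some b0) = j := hb0l
        omega
      set m2 : P → ℕ := fun p => m1 p - bagr O (some cs) p + bagr O (some b0) p with hm2
      have hmv : Reach O.Wm O.Wp m1 m2 := move O hmveq hen1
      have hm2pt : ∀ p, O.layer p = j →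
          m2 p = m p - (if p = cs then 1 else 0) + (if p = b0 then 1 else 0) := by
        intro p hp
        rw [hm2]
        simp only []
        have ecs : O.closed.layer (some cs) = O.closed.layer (some p) := by
          have e1 : O.closed.layer (some cs) = j := hcs1
          have e2 : O.closed.layer (some p) = j := hp
          omega
        have eb0 : O.closed.layer (some b0) = O.closed.layer (some p) := by
          have e1 : O.closed.layer (some b0) = j := hb0l
          have e2 : O.closed.layer (some p) = j := hp
          omega
        rw [bagr_same_layer O ecs, bagr_same_layer O eb0, hlayj p hp]
      have hjunk2 : (∑ p ∈ (O.places j).filter (fun p => ¬ IsMaxAt O j p), m2 p) ≤ k := by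
        have hcsf : cs ∈ (O.places j).filter (fun p => ¬ IsMaxAt O j p) :=
          Finset.mem_filter.mpr ⟨(mem_places O).mpr hcs1, hcsmax⟩
        have hpt : ∀ p ∈ (O.places j).filter (fun p => ¬ IsMaxAt O j p),
            m2 p + (if p = cs then 1 else 0) = m p := by
          intro p hpmem
          obtain ⟨hpp, hpmax⟩ := Finset.mem_filter.mp hpmem
          have hpl : O.layer p = j := (mem_places O).mp hpp
          have hpb0 : p ≠ b0 := fun h => hpmax (h ▸ hb0max)
          have := hm2pt p hpl
          rw [this, if_neg hpb0]
          by_cases hpc : p = cs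
          · have hmcs : 0 < m p := by rw [hpc]; exact hcs2
            rw [if_pos hpc]
            omega
          · rw [if_neg hpc]
            omega
        have hsum2 : (∑ p ∈ (O.places j).filter (fun p => ¬ IsMaxAt O j p), m2 p) + 1
            = ∑ p ∈ (O.places j).filter (fun p => ¬ IsMaxAt O j p), m p := by
          have h5 : m2 cs + 1 = m cs := by
            have h7 := hpt cs hcsf
            rw [if_pos rfl] at h7
            omega
          have h6 : ∑ p ∈ ((O.places j).filter (fun p => ¬ IsMaxAt O j p)).erase cs, m2 p
              = ∑ p ∈ ((O.places j).filter (fun p => ¬ IsMaxAt O j p)).erase cs, m p := by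
            apply Finset.sum_congr rfl
            intro p hp
            obtain ⟨hne, hmem⟩ := Finset.mem_erase.mp hp
            have h7 := hpt p hmem
            rw [if_neg hne] at h7
            omega
          have e1 := Finset.add_sum_erase _ m2 hcsf
          have e2 := Finset.add_sum_erase _ m hcsf
          omega
        omega
      obtain ⟨m3, hr3, hup3, hls3, hmax3⟩ :=
        ih m2 (hm.trans (hr1.trans hmv)) hjunk2
      refine ⟨m3, (hr1.trans hmv).trans hr3, ?_, ?_, hmax3⟩
      · intro p hp
        have hbz1 : bagr O (some cs) p = 0 := by
          apply bagr_eq_zero O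
          · intro h
            have : O.closed.layer (some p) = j := by rw [h]; exact hcs1
            have : O.layer p = j := this
            omega
          · have e1 : O.closed.layer (some cs) = j := hcs1
            have e2 : O.layer p = O.closed.layer (some p) := rfl
            omega
        have hbz2 : bagr O (some b0) p = 0 := by
          apply bagr_eq_zero O
          · intro h
            have : O.closed.layer (some p) = j := by rw [h]; exact hb0l
            have : O.layer p = j := this
            omega
          · have e1 : O.closed.layer (some b0) = j := hb0l
            have e2 : O.layer p = O.closed.layer (some p) := rfl
            omega
        have h2 : m2 p = m1 p := by rw [hm2]; simp only []; rw [hbz1, hbz2]; omega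
        rw [hup3 p hp, h2, hup1 p (by omega)]
      · have e1 : Lsum O j m2 = Lsum O j m1 := by
          have hmove := Lsum_move O (a := some cs) (b := some b0) hen1 j
          rw [sum_bagr_layer_self_some O hcs1, sum_bagr_layer_self_some O hb0l, ← hm2] at hmove
          omega
        have e2 : Lsum O j m1 = Lsum O j m :=
          Finset.sum_congr rfl (fun p hp => hlayj p ((mem_places O).mp hp))
        rw [hls3, e1, e2]

lemma phase2 (m0 : P → ℕ) (hlive : LiveMarked O.Wm O.Wp m0) {j : ℕ}
    (hj1 : 1 ≤ j) (hj2 : j + 1 ≤ Nn) (IH : ∀ j', j' < j → ProcStmt O m0 j') :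
    ∀ (k : ℕ) (m τ : P → ℕ), Reach O.Wm O.Wp m0 m →
      (∀ p, 0 < τ p → O.closed.layer (some p) = j ∧ IsMaxAt O j p) →
      (∑ p, τ p) ≤ Lsum O j m →
      (∀ p, O.layer p = j → 0 < m p → IsMaxAt O j p) →
      (∑ p, (τ p - m p)) ≤ k →
      ∃ m', Reach O.Wm O.Wp m m' ∧ (∀ p, j < O.layer p → m' p = m p) ∧
        Lsum O j m' = Lsum O j m ∧ (∀ p, τ p ≤ m' p) := by
  intro k
  induction k with
  | zero =>
    intro m τ hm hsupp hsum hmm hdef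
    refine ⟨m, Relation.ReflTransGen.refl, fun p _ => rfl, rfl, ?_⟩
    intro p
    have h1 : τ p - m p ≤ ∑ q, (τ q - m q) :=
      Finset.single_le_sum (f := fun q => τ q - m q) (fun q _ => Nat.zero_le _)
        (Finset.mem_univ p)
    omega
  | succ k ih =>
    intro m τ hm hsupp hsum hmm hdef
    by_cases hdone : ∀ p, τ p ≤ m p
    · exact ⟨m, Relation.ReflTransGen.refl, fun p _ => rfl, rfl, hdone⟩
    · push_neg at hdone
      obtain ⟨ps, hps⟩ := hdone
      have hτps : 0 < τ ps := by omega
      obtain ⟨hpsl, hpsmax⟩ := hsupp ps hτps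
      have hpsl' : O.layer ps = j := hpsl
      -- find a place `a` of layer j with a surplus token
      have hsurp : ∃ a, O.layer a = j ∧ τ a < m a := by
        by_contra hno
        push_neg at hno
        have hmτ : ∀ a ∈ O.places j, m a ≤ τ a := by
          intro a ha
          exact hno a ((mem_places O).mp ha)
        have h1 : ∑ a ∈ O.places j, τ a ≤ ∑ p, τ p :=
          Finset.sum_le_sum_of_subset (Finset.subset_univ _)
        have h2 : ∑ a ∈ O.places j, τ a
            = Lsum O j m + ∑ a ∈ O.places j, (τ a - m a) := by
          unfold Lsum
          rw [← Finset.sum_add_distrib]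
          apply Finset.sum_congr rfl
          intro a ha
          have := hmτ a ha
          omega
        have h3 : 1 ≤ ∑ a ∈ O.places j, (τ a - m a) := by
          have hmem : ps ∈ O.places j := (mem_places O).mpr hpsl'
          have h4 : τ ps - m ps ≤ ∑ a ∈ O.places j, (τ a - m a) :=
            Finset.single_le_sum (f := fun a => τ a - m a)
              (fun q _ => Nat.zero_le _) hmem
          omega
        omega
      obtain ⟨a, hal, hasurp⟩ := hsurp
      have hapos : 0 < m a := by omega
      have hamax : IsMaxAt O j a := hmm a hal hapos
      -- rearrange the layer below into the support of `bag a`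
      set τ' : P → ℕ := fun p => if p = a then 0 else bagr O (some a) p with hτ'
      have hsupp' : ∀ p, 0 < τ' p → O.closed.layer (some p) = j - 1 ∧ IsMaxAt O (j-1) p := by
        intro p hp
        rw [hτ'] at hp
        simp only [] at hp
        by_cases hpc : p = a
        · rw [if_pos hpc] at hp; omega
        · rw [if_neg hpc] at hp
          rcases supp_cases O hp with h' | ⟨h', hmax⟩
          · exact absurd (Option.some_injective P h') hpc
          · have haj : O.closed.layer (some a) = j := hal
            have hl' : O.closed.layer (some p) = j - 1 := by omega
            refine ⟨hl', ?_⟩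
            intro r hr
            exact hmax r (by omega)
      have hsum' : (∑ p, τ' p) ≤ Lsum O (j-1) m := by
        obtain ⟨cs, hcs1, hcs2, hcsmin, hcsL⟩ := lemmaL O m0 hlive hm hj1 hj2 hal hapos
        have hcsmax : IsMaxAt O j cs := hmm cs hcs1 hcs2
        have hpota : O.closed.pot (some a) ≤ O.closed.pot (some cs) :=
          hcsmax (some a) hal
        have h2 : ∀ p, τ' p + (if p = a then 1 else 0) = bagr O (some a) p := by
          intro p
          rw [hτ']
          simp only []
          by_cases hpc : p = a
          · subst hpc; rw [if_pos rfl, if_pos rfl, bagr_self' O p]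
          · rw [if_neg hpc, if_neg hpc, add_zero]
        have h1 : (∑ p, τ' p) + 1 = ∑ p, bagr O (some a) p := by
          calc (∑ p, τ' p) + 1
              = ∑ p, (τ' p + if p = a then 1 else 0) := by
                rw [Finset.sum_add_distrib]
                congr 1
                rw [Finset.sum_ite_eq' Finset.univ a (fun _ => 1)]
                simp
            _ = ∑ p, bagr O (some a) p := Finset.sum_congr rfl (fun p _ => h2 p)
        have h3 := sum_bagr_univ_some O a
        have hpcs : O.pot cs = O.closed.pot (some cs) := rfl
        have hpa : O.pot a = O.closed.pot (some a) := rfl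
        omega
      obtain ⟨m1, hr1, hup1, hls1, hτ1⟩ := IH (j-1) (by omega) m τ' hm hsupp' hsum'
      have hlayj : ∀ p, O.layer p = j → m1 p = m p := fun p hp => hup1 p (by omega)
      have hen1 : ∀ p, bagr O (some a) p ≤ m1 p := by
        intro p
        by_cases hpc : p = a
        · subst hpc
          rw [bagr_self' O p, hlayj p hal]
          omega
        · have h4 := hτ1 p
          rw [hτ'] at h4
          simp only [if_neg hpc] at h4
          exact h4
      have hmveq : O.closed.layer (some a) = O.closed.layer (some ps) := by
        have e1 : O.closed.layer (some a) = j := hal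
        have e2 : O.closed.layer (some ps) = j := hpsl
        omega
      set m2 : P → ℕ := fun p => m1 p - bagr O (some a) p + bagr O (some ps) p with hm2
      have hmv : Reach O.Wm O.Wp m1 m2 := move O hmveq hen1
      have haps : a ≠ ps := by
        intro h
        rw [h] at hasurp
        omega
      have hm2pt : ∀ p, O.layer p = j →
          m2 p = m p - (if p = a then 1 else 0) + (if p = ps then 1 else 0) := by
        intro p hp
        have ea : O.closed.layer (some a) = O.closed.layer (some p) := by
          have e1 : O.closed.layer (some a) = j := hal
          have e2 : O.closed.layer (some p) = j := hp
          omega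
        have eps : O.closed.layer (some ps) = O.closed.layer (some p) := by
          have e1 : O.closed.layer (some ps) = j := hpsl
          have e2 : O.closed.layer (some p) = j := hp
          omega
        rw [hm2]
        simp only []
        rw [bagr_same_layer O ea, bagr_same_layer O eps, hlayj p hp]
      have hm2nj : ∀ p, O.layer p ≠ j → τ p = 0 := by
        intro p hp
        by_contra h
        have := (hsupp p (by omega)).1
        exact hp this
      -- the new deficit decreased
      have hptw : ∀ p, (τ p - m2 p) + (if p = ps then 1 else 0) ≤ τ p - m p := by
        intro p
        by_cases hpj : O.layer p = j
        · have hpt := hm2pt p hpj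
          by_cases hpa : p = a
          · subst hpa
            rw [if_pos rfl, if_neg haps] at hpt
            rw [if_neg haps]
            omega
          · by_cases hpps : p = ps
            · subst hpps
              rw [if_neg hpa, if_pos rfl] at hpt
              rw [if_pos rfl]
              omega
            · rw [if_neg hpa, if_neg hpps] at hpt
              rw [if_neg hpps]
              omega
        · have hτ0 : τ p = 0 := hm2nj p hpj
          have hpps : p ≠ ps := by
            intro h; rw [h] at hpj; exact hpj hpsl'
          rw [if_neg hpps, hτ0]
          omega
      have hdef2 : (∑ p, (τ p - m2 p)) ≤ k := by
        have h1 : ∑ p, ((τ p - m2 p) + if p = ps then 1 else 0) ≤ ∑ p, (τ p - m p) :=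
          Finset.sum_le_sum (fun p _ => hptw p)
        rw [Finset.sum_add_distrib] at h1
        have h2 : (∑ p : P, if p = ps then (1:ℕ) else 0) = 1 := by
          rw [Finset.sum_ite_eq' Finset.univ ps (fun _ => 1)]
          simp
        omega
      have hmm2 : ∀ p, O.layer p = j → 0 < m2 p → IsMaxAt O j p := by
        intro p hp hpos
        have hpt := hm2pt p hp
        by_cases hpps : p = ps
        · subst hpps; exact hpsmax
        · rw [if_neg hpps] at hpt
          by_cases hpa : p = a
          · subst hpa; exact hamax
          · rw [if_neg hpa] at hpt
            have hmp : 0 < m p := by omega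
            exact hmm p hp hmp
      have hls2 : Lsum O j m2 = Lsum O j m := by
        have hmove := Lsum_move O (a := some a) (b := some ps) hen1 j
        rw [sum_bagr_layer_self_some O hal, sum_bagr_layer_self_some O hpsl, ← hm2] at hmove
        have e2 : Lsum O j m1 = Lsum O j m :=
          Finset.sum_congr rfl (fun p hp => hlayj p ((mem_places O).mp hp))
        omega
      obtain ⟨m3, hr3, hup3, hls3, hτ3⟩ :=
        ih m2 τ (hm.trans (hr1.trans hmv)) hsupp (by rw [hls2]; exact hsum) hmm2 hdef2
      refine ⟨m3, (hr1.trans hmv).trans hr3, ?_, ?_, hτ3⟩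
      · intro p hp
        have hbz1 : bagr O (some a) p = 0 := by
          apply bagr_eq_zero O
          · intro h
            have h5 : O.closed.layer (some p) = j := by rw [h]; exact hal
            have h6 : O.layer p = j := h5
            omega
          · have e1 : O.closed.layer (some a) = j := hal
            have e2 : O.layer p = O.closed.layer (some p) := rfl
            omega
        have hbz2 : bagr O (some ps) p = 0 := by
          apply bagr_eq_zero O
          · intro h
            have h5 : O.closed.layer (some p) = j := by rw [h]; exact hpsl
            have h6 : O.layer p = j := h5
            omega
          · have e1 : O.closed.layer (some ps) = j := hpsl
            have e2 : O.layer p = O.closed.layer (some p) := rfl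
            omega
        have h2 : m2 p = m1 p := by rw [hm2]; simp only []; rw [hbz1, hbz2]; omega
        rw [hup3 p hp, h2, hup1 p (by omega)]
      · rw [hls3, hls2]

lemma procAll (m0 : P → ℕ) (hlive : LiveMarked O.Wm O.Wp m0) :
    ∀ j, j + 1 ≤ Nn → ProcStmt O m0 j := by
  intro j
  induction j using Nat.strong_induction_on with
  | _ j IHs =>
    intro hj2 m τ hm hsupp hsum
    by_cases hj0 : j = 0
    · subst hj0
      have hτ0 : ∀ p, τ p = 0 := by
        intro p
        by_contra h
        have h1 := (hsupp p (by omega)).1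
        have h2 := O.closed.layer_pos (some p)
        omega
      exact ⟨m, Relation.ReflTransGen.refl, fun p _ => rfl, rfl,
        fun p => by rw [hτ0 p]; exact Nat.zero_le _⟩
    · have hj1 : 1 ≤ j := by omega
      have IH : ∀ j', j' < j → ProcStmt O m0 j' := fun j' hj' => IHs j' hj' (by omega)
      obtain ⟨m1, hr1, hup1, hls1, hmax1⟩ := phase1 O m0 hlive hj1 hj2 IH
        (∑ p ∈ (O.places j).filter (fun p => ¬ IsMaxAt O j p), m p) m hm le_rfl
      obtain ⟨m2, hr2, hup2, hls2, hτ2⟩ := phase2 O m0 hlive hj1 hj2 IH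
        (∑ p, (τ p - m1 p)) m1 τ (hm.trans hr1) hsupp
        (by rw [hls1]; exact hsum) hmax1 le_rfl
      refine ⟨m2, hr1.trans hr2, ?_, ?_, hτ2⟩
      · intro p hp
        rw [hup2 p hp, hup1 p hp]
      · rw [hls2, hls1]

lemma pump (m0 : P → ℕ) (hlive : LiveMarked O.Wm O.Wp m0) {q : P}
    (hq : O.layer q = Nn) (hpot : O.closed.pot none ≤ O.closed.pot (some q)) :
    ∀ k : ℕ, ∃ m, Reach O.Wm O.Wp m0 m ∧ (∀ p, bagr O none p ≤ m p) ∧ k ≤ m q := by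
  obtain ⟨t0, ht0⟩ := exists_out_trans O (none : Option P)
  intro k
  induction k with
  | zero =>
    obtain ⟨n, hn, hen⟩ := hlive t0 m0 Relation.ReflTransGen.refl
    exact ⟨n, hn, fun p => by rw [← open_Wm_eq O ht0 p]; exact hen p, Nat.zero_le _⟩
  | succ k ih =>
    obtain ⟨m, hm, hen, hk⟩ := ih
    have hlq : O.closed.layer (none : Option P) = O.closed.layer (some q) := by
      have e1 : O.closed.layer (none : Option P) = Nn := layer_none O
      have e2 : O.closed.layer (some q) = Nn := hq
      omega
    set m1 : P → ℕ := fun p => m p - bagr O none p + bagr O (some q) p with hm1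
    have hmv : Reach O.Wm O.Wp m m1 := move O hlq hen
    have hbnq : bagr O none q = 0 := by
      apply bagr_eq_zero O (by simp)
      have e1 : O.closed.layer (some q) = Nn := hq
      have e2 : O.closed.layer (none : Option P) = Nn := layer_none O
      omega
    have hm1q : m1 q = m q + 1 := by
      rw [hm1]
      simp only []
      rw [hbnq, bagr_self' O q]
      omega
    have hNn1 : (Nn - 1) + 1 ≤ Nn := by have := one_le_Nn O; omega
    have hsupp : ∀ p, 0 < bagr O none p →
        O.closed.layer (some p) = Nn - 1 ∧ IsMaxAt O (Nn - 1) p := by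
      intro p hp
      rcases supp_cases O hp with h' | ⟨h', hmax⟩
      · exact absurd h' (by simp)
      · rw [layer_none O] at h'
        have hl' : O.closed.layer (some p) = Nn - 1 := by omega
        exact ⟨hl', fun r hr => hmax r (by omega)⟩
    have hsum : (∑ p, bagr O none p) ≤ Lsum O (Nn - 1) m1 := by
      have h1 : ∑ p ∈ O.places (Nn - 1), bagr O (some q) p ≤ Lsum O (Nn - 1) m1 := by
        apply Finset.sum_le_sum
        intro p _
        rw [hm1]
        simp only []
        omega
      rw [sum_bagr_supp O (c := some q) hq (by omega)] at h1
      rw [sum_bagr_univ_none O]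
      omega
    obtain ⟨m2, hr2, hup2, hls2, hτ2⟩ := procAll O m0 hlive (Nn - 1) hNn1 m1
      (bagr O none) (hm.trans hmv) hsupp hsum
    refine ⟨m2, hm.trans (hmv.trans hr2), hτ2, ?_⟩
    have hq2 : m2 q = m1 q := by
      apply hup2 q
      have e2 : O.layer q = Nn := hq
      have e3 := one_le_Nn O
      omega
    omega

lemma unbounded_of_bad (m0 : P → ℕ) (hlive : LiveMarked O.Wm O.Wp m0) {q : P}
    (hq : q ∈ O.places Nn) (hcin : ¬ 0 < O.cin q) :
    ¬ ∃ B : ℕ, ∀ m : P → ℕ, Reach O.Wm O.Wp m0 m → ∑ p, m p ≤ B := by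
  rintro ⟨B, hB⟩
  have hql : O.layer q = Nn := (mem_places O).mp hq
  have hpot : O.closed.pot none ≤ O.closed.pot (some q) := by
    rw [OpenPi3.cin, hql, OpenPi3.POT, if_pos rfl] at hcin
    have e1 : O.potExt = O.closed.pot none := rfl
    have e2 : O.pot q = O.closed.pot (some q) := rfl
    omega
  obtain ⟨m, hm, _, hk⟩ := pump O m0 hlive hql hpot (B + 1)
  have h1 : m q ≤ ∑ p, m p :=
    Finset.single_le_sum (f := m) (fun p _ => Nat.zero_le _) (Finset.mem_univ q)
  have h2 := hB m hm
  omega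

end Pi3Aux

/-- A live marked N-layer open Π³-net is bounded iff `cin(q) > 0`
for every `q ∈ P_N`; when this holds, `‖m‖ ≤ Σ_{i=1}^{N−1} C_i^{m0}` for every
reachable `m`. -/
theorem stmt_6 (P T : Type) [Fintype P] [Fintype T] (Nn : ℕ)
    (O : OpenPi3 P T Nn) (m0 : P → ℕ) (hlive : LiveMarked O.Wm O.Wp m0) :
    ((∃ B : ℕ, ∀ m : P → ℕ, Reach O.Wm O.Wp m0 m → ∑ p, m p ≤ B) ↔
      ∀ q ∈ O.places Nn, 0 < O.cin q) ∧
    ((∀ q ∈ O.places Nn, 0 < O.cin q) →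
      ∀ m : P → ℕ, Reach O.Wm O.Wp m0 m →
        (∑ p, (m p : ℤ)) ≤ ∑ i ∈ Finset.Icc 1 (Nn - 1), O.vdot i m0) := by
  constructor
  · constructor
    · intro hB q hq
      by_contra hcin
      exact Pi3Aux.unbounded_of_bad O m0 hlive hq hcin hB
    · intro hcin
      exact Pi3Aux.bounded_of_cin O m0 hcin
  · intro hcin m hm
    exact Pi3Aux.bound_sum O m0 hcin hm
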